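/- Let 0<β<1. Define u:ℝ→ℝ by u(x) = x^{2+β} + x for x ≥ 0 and u(x) = x for x < 0 (so u is a strictly increasing bijection of ℝ onto itself with inverse u^{-1}), and define f:ℝ→ℝ by f(t) = (2+β)(1+β)·(u^{-1}(t))^β for t ≥ 0 and f(t) = 0 for t < 0. Then: (1) u is twice differentiable on ℝ and u''(x) = f(u(x)) for every x ∈ ℝ; (2) for every M > 0, f restricted to [-M,M] is Hölder continuous of exponent β, with |f(p)-f(q)| ≤ (2+β)(1+β)|p-q|^β for all p,q ∈ [-M,M]; (3) for every ε>0 and δ>0, u restricted to [-δ,δ] does not belong to C^{2+β+ε}([-δ,δ]). -/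

import Mathlib

open MeasureTheory Filter Set

/-- The normalizing constant `c_s` of the fractional Laplacian. -/
noncomputable def fracLapCoef (s : ℝ) : ℝ :=
  s * (4 : ℝ) ^ s * Real.Gamma (1 / 2 + s) / (Real.sqrt Real.pi * Real.Gamma (1 - s))

/-- `HasFracLapAt s u x L` means the principal value defining `(-Δ)^s u (x)`
exists and equals `L`. -/
def HasFracLapAt (s : ℝ) (u : ℝ → ℝ) (x L : ℝ) : Prop :=
  (∀ ε : ℝ, 0 < ε →
    MeasureTheory.IntegrableOn (fun y : ℝ => (u x - u y) / |x - y| ^ (1 + 2 * s))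
      {y : ℝ | ε < |y - x|}) ∧
  Filter.Tendsto (fun ε : ℝ =>
      fracLapCoef s * ∫ y in {y : ℝ | ε < |y - x|}, (u x - u y) / |x - y| ^ (1 + 2 * s))
    (nhdsWithin 0 (Set.Ioi 0)) (nhds L)

/-- `MemCalpha α Ω f` : `f ∈ C^α(Ω)`, i.e. `f` is continuously differentiable with bounded
derivatives up to order `⌊α⌋` on `Ω`, and its `⌊α⌋`-th derivative is Hölder continuous of
exponent `α - ⌊α⌋` on `Ω`. -/
def MemCalpha (α : ℝ) (Ω : Set ℝ) (f : ℝ → ℝ) : Prop :=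
  ContDiffOn ℝ (⌊α⌋₊ : ℕ) f Ω ∧
  (∀ k : ℕ, k ≤ ⌊α⌋₊ → ∃ C : ℝ, ∀ x ∈ Ω, |iteratedDerivWithin k f Ω x| ≤ C) ∧
  ∃ C : NNReal, HolderOnWith C (α - (⌊α⌋₊ : ℝ)).toNNReal (iteratedDerivWithin ⌊α⌋₊ f Ω) Ω

lemma aux_hasDerivAt_maxpow {c : ℝ} (hc : 1 < c) (x : ℝ) :
    HasDerivAt (fun y : ℝ => max y 0 ^ c) (c * max x 0 ^ (c - 1)) x := by
  rcases lt_trichotomy x 0 with hx | hx | hx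
  · have h0 : max x 0 = 0 := max_eq_right hx.le
    rw [h0, Real.zero_rpow (by linarith), mul_zero]
    have hev : (fun y : ℝ => max y 0 ^ c) =ᶠ[nhds x] fun _ => (0:ℝ) ^ c := by
      filter_upwards [eventually_lt_nhds hx] with y hy
      rw [max_eq_right hy.le]
    exact (hasDerivAt_const x ((0:ℝ) ^ c)).congr_of_eventuallyEq hev
  · subst hx
    rw [max_self, Real.zero_rpow (by linarith), mul_zero]
    rw [hasDerivAt_iff_tendsto_slope]
    have hb : ∀ᶠ y in nhdsWithin (0:ℝ) {(0:ℝ)}ᶜ,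
        ‖slope (fun y : ℝ => max y 0 ^ c) 0 y‖ ≤ |y| ^ (c - 1) := by
      filter_upwards [self_mem_nhdsWithin] with y (hy : y ≠ 0)
      rcases le_or_gt y 0 with h | h
      · have : slope (fun y : ℝ => max y 0 ^ c) 0 y = 0 := by
          simp [slope_def_field, max_eq_right h, max_self, Real.zero_rpow (show c ≠ 0 by linarith)]
        rw [this]
        simpa using Real.rpow_nonneg (abs_nonneg y) (c - 1)
      · have : slope (fun y : ℝ => max y 0 ^ c) 0 y = y ^ (c - 1) := by
          rw [slope_def_field, max_eq_left h.le, max_self,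
            Real.zero_rpow (show c ≠ 0 by linarith), sub_zero, sub_zero,
            Real.rpow_sub_one h.ne' c]
        rw [this, Real.norm_eq_abs, abs_of_nonneg (Real.rpow_nonneg h.le _), abs_of_pos h]
    refine squeeze_zero_norm' hb ?_
    have hcont : ContinuousAt (fun y : ℝ => |y| ^ (c - 1)) 0 := by
      have h1 : ContinuousAt (fun y : ℝ => y ^ (c-1)) (|(0:ℝ)|) :=
        Real.continuousAt_rpow_const _ _ (Or.inr (by linarith))
      exact h1.comp continuous_abs.continuousAt
    have h := hcont.tendsto
    simp only [abs_zero, Real.zero_rpow (show c - 1 ≠ 0 by linarith)] at h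
    exact h.mono_left nhdsWithin_le_nhds
  · have h0 : max x 0 = x := max_eq_left hx.le
    rw [h0]
    have hev : (fun y : ℝ => max y 0 ^ c) =ᶠ[nhds x] fun y => y ^ c := by
      filter_upwards [eventually_gt_nhds hx] with y hy
      rw [max_eq_left hy.le]
    exact (Real.hasDerivAt_rpow_const (Or.inl hx.ne')).congr_of_eventuallyEq hev

lemma aux_rpow_sub {β a b : ℝ} (hβ0 : 0 < β) (hβ1 : β ≤ 1) (hb : 0 ≤ b) (hba : b ≤ a) :
    a ^ β - b ^ β ≤ (a - b) ^ β := by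
  have h := NNReal.rpow_add_le_add_rpow ((a-b).toNNReal) (b.toNNReal) hβ0.le hβ1
  rw [← NNReal.coe_le_coe] at h
  push_cast at h
  rw [Real.coe_toNNReal _ (by linarith : (0:ℝ) ≤ a - b), Real.coe_toNNReal _ hb,
    sub_add_cancel] at h
  linarith

theorem stmt16 (β : ℝ) (hβ0 : 0 < β) (hβ1 : β < 1)
    (u v f : ℝ → ℝ)
    (hu1 : ∀ x : ℝ, 0 ≤ x → u x = x ^ (2 + β) + x)
    (hu2 : ∀ x : ℝ, x < 0 → u x = x)
    (hv1 : Function.LeftInverse v u) (hv2 : Function.RightInverse v u)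
    (hf1 : ∀ t : ℝ, 0 ≤ t → f t = (2 + β) * (1 + β) * v t ^ β)
    (hf2 : ∀ t : ℝ, t < 0 → f t = 0) :
    ((∀ x : ℝ, DifferentiableAt ℝ u x) ∧ (∀ x : ℝ, DifferentiableAt ℝ (deriv u) x) ∧
      ∀ x : ℝ, deriv (deriv u) x = f (u x)) ∧
    (∀ M : ℝ, 0 < M → ∀ p ∈ Set.Icc (-M) M, ∀ q ∈ Set.Icc (-M) M,
      |f p - f q| ≤ (2 + β) * (1 + β) * |p - q| ^ β) ∧
    (∀ ε δ : ℝ, 0 < ε → 0 < δ → ¬ MemCalpha (2 + β + ε) (Set.Icc (-δ) δ) u) := by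
  set K : ℝ := (2 + β) * (1 + β) with hK
  have hKpos : 0 < K := by nlinarith
  -- u as a globally defined formula
  have hueq : u = fun x : ℝ => max x 0 ^ (2 + β) + x := by
    funext x
    rcases le_or_gt 0 x with hx | hx
    · rw [hu1 x hx, max_eq_left hx]
    · rw [hu2 x hx, max_eq_right hx.le, Real.zero_rpow (by linarith), zero_add]
  -- first derivative
  have hd1 : ∀ x : ℝ, HasDerivAt u ((2 + β) * max x 0 ^ (1 + β) + 1) x := by
    intro x
    rw [hueq]
    have h := (aux_hasDerivAt_maxpow (show (1:ℝ) < 2 + β by linarith) x).add (hasDerivAt_id x)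
    rw [show (2 + β) - 1 = 1 + β by ring] at h
    exact h
  have hderivu : deriv u = fun x : ℝ => (2 + β) * max x 0 ^ (1 + β) + 1 :=
    funext fun x => (hd1 x).deriv
  -- second derivative
  have hd2 : ∀ x : ℝ, HasDerivAt (deriv u) (K * max x 0 ^ β) x := by
    intro x
    rw [hderivu]
    have h := ((aux_hasDerivAt_maxpow (show (1:ℝ) < 1 + β by linarith) x).const_mul
      (2 + β)).add_const 1
    rw [show (1 + β) - 1 = β by ring] at h
    have : (2 + β) * ((1 + β) * max x 0 ^ β) = K * max x 0 ^ β := by rw [hK]; ring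
    rwa [this] at h
  have hderiv2 : ∀ x : ℝ, deriv (deriv u) x = K * max x 0 ^ β := fun x => (hd2 x).deriv
  -- basic facts about v
  have hu0 : u 0 = 0 := by
    rw [hu1 0 le_rfl, Real.zero_rpow (by linarith), zero_add]
  have hvnn : ∀ t : ℝ, 0 ≤ t → 0 ≤ v t := by
    intro t ht
    by_contra h
    push_neg at h
    have := hv2 t
    rw [hu2 _ h] at this
    linarith
  have hveq : ∀ t : ℝ, 0 ≤ t → v t ^ (2 + β) + v t = t := by
    intro t ht
    have := hv2 t
    rwa [hu1 _ (hvnn t ht)] at this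
  have hvle : ∀ t : ℝ, 0 ≤ t → v t ≤ t := by
    intro t ht
    have h1 := hveq t ht
    have h2 : 0 ≤ v t ^ (2 + β) := Real.rpow_nonneg (hvnn t ht) _
    linarith
  have hvmono : ∀ p q : ℝ, 0 ≤ q → q ≤ p → v q ≤ v p ∧ v p - v q ≤ p - q := by
    intro p q hq hqp
    have hp : (0:ℝ) ≤ p := le_trans hq hqp
    have hvq := hvnn q hq
    have hvp := hvnn p hp
    have hle : v q ≤ v p := by
      by_contra h
      push_neg at h
      have hr : v p ^ (2 + β) ≤ v q ^ (2 + β) := Real.rpow_le_rpow hvp h.le (by linarith)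
      have e1 := hveq p hp
      have e2 := hveq q hq
      linarith
    have hr : v q ^ (2 + β) ≤ v p ^ (2 + β) := Real.rpow_le_rpow hvq hle (by linarith)
    have e1 := hveq p hp
    have e2 := hveq q hq
    exact ⟨hle, by linarith⟩
  -- part 1
  refine ⟨⟨fun x => (hd1 x).differentiableAt, fun x => (hd2 x).differentiableAt, ?_⟩, ?_, ?_⟩
  · intro x
    rw [hderiv2 x]
    rcases le_or_gt 0 x with hx | hx
    · have hux : 0 ≤ u x := by
        rw [hu1 x hx]
        have := Real.rpow_nonneg hx (2 + β)
        linarith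
      rw [hf1 _ hux, hv1 x, max_eq_left hx]
    · rw [hu2 x hx, hf2 x hx, max_eq_right hx.le,
        Real.zero_rpow (ne_of_gt hβ0), mul_zero]
  -- part 2
  · have key : ∀ p q : ℝ, q ≤ p → |f p - f q| ≤ K * |p - q| ^ β := by
      intro p q hqp
      rcases le_or_gt 0 q with hq | hq
      · have hp : (0:ℝ) ≤ p := le_trans hq hqp
        obtain ⟨hle, hdiff⟩ := hvmono p q hq hqp
        have hvq := hvnn q hq
        have h1 : v p ^ β - v q ^ β ≤ (v p - v q) ^ β := aux_rpow_sub hβ0 hβ1.le hvq hle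
        have h2 : (v p - v q) ^ β ≤ (p - q) ^ β :=
          Real.rpow_le_rpow (by linarith) hdiff hβ0.le
        have h3 : v q ^ β ≤ v p ^ β := Real.rpow_le_rpow hvq hle hβ0.le
        rw [hf1 _ hp, hf1 _ hq, ← mul_sub, abs_mul, abs_of_pos hKpos,
          abs_of_nonneg (by linarith : (0:ℝ) ≤ v p ^ β - v q ^ β),
          abs_of_nonneg (by linarith : (0:ℝ) ≤ p - q)]
        have := le_trans h1 h2
        nlinarith
      · rcases le_or_gt 0 p with hp | hp
        · have hvp := hvnn p hp
          have h1 : v p ≤ p - q := by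
            have := hvle p hp
            linarith
          have h2 : v p ^ β ≤ (p - q) ^ β := Real.rpow_le_rpow hvp h1 hβ0.le
          rw [hf1 _ hp, hf2 _ hq, sub_zero, abs_mul, abs_of_pos hKpos,
            abs_of_nonneg (Real.rpow_nonneg hvp β),
            abs_of_nonneg (by linarith : (0:ℝ) ≤ p - q)]
          nlinarith
        · rw [hf2 _ hp, hf2 _ hq, sub_self, abs_zero]
          positivity
    intro M _ p _ q _
    rcases le_total q p with h | h
    · exact key p q h
    · rw [← abs_sub_comm (f q) (f p), ← abs_sub_comm q p] at *
      exact key q p h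
  -- part 3
  · intro ε δ hε hδ hmem
    obtain ⟨hcd, -, C, hH⟩ := hmem
    set s : Set ℝ := Set.Icc (-δ) δ with hs
    have hδδ : -δ < δ := by linarith
    have hUD : UniqueDiffOn ℝ s := uniqueDiffOn_Icc hδδ
    have hmem0 : (0:ℝ) ∈ s := ⟨by linarith, hδ.le⟩
    have e1 : ∀ x ∈ s, iteratedDerivWithin 1 u s x = deriv u x := by
      intro x hx
      rw [iteratedDerivWithin_one]
      exact (hd1 x).differentiableAt.derivWithin (hUD x hx)
    have e2 : ∀ x ∈ s, iteratedDerivWithin 2 u s x = K * max x 0 ^ β := by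
      intro x hx
      rw [show (2:ℕ) = 1 + 1 from rfl, iteratedDerivWithin_succ,
        derivWithin_congr e1 (e1 x hx),
        (hd2 x).differentiableAt.derivWithin (hUD x hx), hderiv2 x]
    rcases lt_or_ge (β + ε) 1 with hcase | hcase
    · -- floor = 2, use the Hölder condition
      have hfl : ⌊(2 + β + ε)⌋₊ = 2 := by
        rw [Nat.floor_eq_iff (by linarith)]
        constructor <;> [norm_num; push_cast] <;> linarith
      rw [hfl] at hH
      have hrr : ((2 + β + ε - ((2:ℕ):ℝ)).toNNReal : ℝ) = β + ε := by
        rw [Real.coe_toNNReal]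
        · push_cast; ring
        · push_cast; linarith
      -- pick a small point
      set t : ℝ := (K / (2 * ((C:ℝ) + 1))) ^ (ε⁻¹ : ℝ) with ht
      have hCpos : (0:ℝ) < (C:ℝ) + 1 := by positivity
      have htpos : 0 < t := Real.rpow_pos_of_pos (by positivity) _
      set x0 : ℝ := min δ t with hx0
      have hx0pos : 0 < x0 := lt_min hδ htpos
      have hx0s : x0 ∈ s := ⟨by linarith, min_le_left _ _⟩
      have hedist := hH.edist_le hx0s hmem0
      rw [e2 x0 hx0s, e2 0 hmem0, max_eq_left hx0pos.le, max_self,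
        Real.zero_rpow (ne_of_gt hβ0), mul_zero, hrr] at hedist
      have hdd1 : edist (K * x0 ^ β) (0:ℝ) = ENNReal.ofReal (K * x0 ^ β) := by
        rw [edist_dist, Real.dist_eq, sub_zero, abs_of_pos (by positivity)]
      have hdd2 : edist x0 (0:ℝ) = ENNReal.ofReal x0 := by
        rw [edist_dist, Real.dist_eq, sub_zero, abs_of_pos hx0pos]
      rw [hdd1, hdd2, ENNReal.ofReal_rpow_of_pos hx0pos] at hedist
      have hco : (↑C : ENNReal) * ENNReal.ofReal (x0 ^ (β + ε)) =
          ENNReal.ofReal ((C:ℝ) * x0 ^ (β + ε)) := by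
        rw [ENNReal.ofReal_mul (NNReal.coe_nonneg C), ENNReal.ofReal_coe_nnreal]
      rw [hco] at hedist
      have hdist : K * x0 ^ β ≤ (C:ℝ) * x0 ^ (β + ε) :=
        (ENNReal.ofReal_le_ofReal_iff (by positivity)).mp hedist
      -- derive contradiction
      have hx0e : x0 ^ ε ≤ K / (2 * ((C:ℝ) + 1)) := by
        have h1 : x0 ^ ε ≤ t ^ ε :=
          Real.rpow_le_rpow hx0pos.le (min_le_right _ _) hε.le
        have h2 : t ^ ε = K / (2 * ((C:ℝ) + 1)) := by
          rw [ht, Real.rpow_inv_rpow (by positivity) (ne_of_gt hε)]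
        linarith
      have hsplit : x0 ^ (β + ε) = x0 ^ β * x0 ^ ε := Real.rpow_add hx0pos β ε
      have hxβpos : 0 < x0 ^ β := Real.rpow_pos_of_pos hx0pos β
      have hxεpos : 0 < x0 ^ ε := Real.rpow_pos_of_pos hx0pos ε
      have hle : K ≤ (C:ℝ) * x0 ^ ε := by
        rw [hsplit] at hdist
        nlinarith [NNReal.coe_nonneg C]
      have h5 : (C:ℝ) * x0 ^ ε ≤ (C:ℝ) * (K / (2 * ((C:ℝ) + 1))) :=
        mul_le_mul_of_nonneg_left hx0e (NNReal.coe_nonneg C)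
      have hfin : (C:ℝ) * (K / (2 * ((C:ℝ) + 1))) < K := by
        rw [mul_div_assoc', div_lt_iff₀ (by positivity)]
        nlinarith [NNReal.coe_nonneg C]
      linarith
    · -- floor ≥ 3, use differentiability of the second derivative
      have hfl3 : 3 ≤ ⌊(2 + β + ε)⌋₊ := by
        apply Nat.le_floor
        push_cast
        linarith
      have hdo : DifferentiableOn ℝ (iteratedDerivWithin 2 u s) s := by
        apply hcd.differentiableOn_iteratedDerivWithin _ hUD
        exact_mod_cast Nat.lt_of_lt_of_le (by norm_num) hfl3
      have hdw : DifferentiableWithinAt ℝ (fun x : ℝ => K * max x 0 ^ β) s 0 := by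
        apply (hdo 0 hmem0).congr (fun y hy => (e2 y hy).symm) (e2 0 hmem0).symm
      obtain ⟨d, hd⟩ : ∃ d, HasDerivWithinAt (fun x : ℝ => K * max x 0 ^ β) d s 0 :=
        ⟨_, hdw.hasDerivWithinAt⟩
      rw [hasDerivWithinAt_iff_tendsto_slope] at hd
      have hsubset : Set.Ioc (0:ℝ) δ ⊆ s \ {0} := by
        intro y hy
        exact ⟨⟨by linarith [hy.1], hy.2⟩, ne_of_gt hy.1⟩
      have hd' : Tendsto (slope (fun x : ℝ => K * max x 0 ^ β) 0)
          (nhdsWithin 0 (Set.Ioc (0:ℝ) δ)) (nhds d) :=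
        hd.mono_left (nhdsWithin_mono _ hsubset)
      have hev : (fun x : ℝ => K * x ^ (β - 1)) =ᶠ[nhdsWithin 0 (Set.Ioc (0:ℝ) δ)]
          slope (fun x : ℝ => K * max x 0 ^ β) 0 := by
        filter_upwards [self_mem_nhdsWithin] with y hy
        have hy0 : 0 < y := hy.1
        rw [slope_def_field, max_eq_left hy0.le, max_self,
          Real.zero_rpow (ne_of_gt hβ0), mul_zero, sub_zero, sub_zero,
          Real.rpow_sub_one hy0.ne' β, mul_div_assoc]
      have hd'' : Tendsto (fun x : ℝ => K * x ^ (β - 1))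
          (nhdsWithin 0 (Set.Ioc (0:ℝ) δ)) (nhds d) := hd'.congr' hev.symm
      have hne : (nhdsWithin (0:ℝ) (Set.Ioc (0:ℝ) δ)).NeBot := by
        rw [← mem_closure_iff_nhdsWithin_neBot, closure_Ioc (ne_of_lt hδ)]
        exact ⟨le_rfl, hδ.le⟩
      have hatTop : Tendsto (fun x : ℝ => K * x ^ (β - 1))
          (nhdsWithin 0 (Set.Ioc (0:ℝ) δ)) atTop := by
        have h1 : Tendsto (fun x : ℝ => x ^ (1 - β))
            (nhdsWithin 0 (Set.Ioc (0:ℝ) δ)) (nhdsWithin 0 (Set.Ioi (0:ℝ))) := by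
          rw [tendsto_nhdsWithin_iff]
          constructor
          · have hc : ContinuousAt (fun x : ℝ => x ^ (1 - β)) 0 :=
              Real.continuousAt_rpow_const _ _ (Or.inr (by linarith))
            have h0 := hc.tendsto
            rw [Real.zero_rpow (by intro h; linarith [sub_eq_zero.mp h] : (1:ℝ) - β ≠ 0)] at h0
            exact h0.mono_left nhdsWithin_le_nhds
          · filter_upwards [self_mem_nhdsWithin] with y hy
            exact Real.rpow_pos_of_pos hy.1 _
        have h2 : Tendsto (fun x : ℝ => (x ^ (1 - β))⁻¹)
            (nhdsWithin 0 (Set.Ioc (0:ℝ) δ)) atTop := h1.inv_tendsto_nhdsGT_zero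
        have h3 : Tendsto (fun x : ℝ => x ^ (β - 1))
            (nhdsWithin 0 (Set.Ioc (0:ℝ) δ)) atTop := by
          apply h2.congr'
          filter_upwards [self_mem_nhdsWithin] with y hy
          rw [← Real.rpow_neg hy.1.le, neg_sub]
        exact Tendsto.const_mul_atTop hKpos h3
      exact not_tendsto_atTop_of_tendsto_nhds hd'' hatTop
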